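/- Let V be an infinite-dimensional vector space over a field F. A finite-rank endomorphism φ ∈ I_{ℵ₀} satisfies tr(φ) = 0 if and only if φ ∈ [I_{ℵ₀}, I_{ℵ₀}], the span of commutators of finite-rank endomorphisms. Consequently [I_{ℵ₀}, I_{ℵ₀}] has codimension 1 in I_{ℵ₀}. -/

import Mathlib

open Cardinal LinearMap

variable (F V : Type*) [Field F] [AddCommGroup V] [Module F V]

/-- The ideal `I_α` of endomorphisms of rank `< α` (for an infinite cardinal `α`),
as a subspace of `End F V`. -/
def rankIdeal (α : Cardinal) (hα : ℵ₀ ≤ α) : Submodule F (Module.End F V) where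
  carrier := {φ | LinearMap.rank φ < α}
  zero_mem' := by
    simp only [Set.mem_setOf_eq, LinearMap.rank_zero]
    exact lt_of_lt_of_le aleph0_pos hα
  add_mem' := fun hf hg =>
    lt_of_le_of_lt (LinearMap.rank_add_le _ _) (Cardinal.add_lt_of_lt hα hf hg)
  smul_mem' := by
    intro c f hf
    have h1 : LinearMap.range (c • f) ≤ LinearMap.range f := by
      rintro x ⟨y, rfl⟩
      exact ⟨c • y, by simp⟩
    exact lt_of_le_of_lt (Submodule.rank_mono h1) hf


section Helpers
variable {F V}

lemma fdRange {φ : Module.End F V} (hφ : LinearMap.rank φ < ℵ₀) :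
    FiniteDimensional F (LinearMap.range φ) := Module.rank_lt_aleph0_iff.mp hφ

lemma traceRestrict_eq_range {φ : Module.End F V} {W : Submodule F V}
    [FiniteDimensional F W] [FiniteDimensional F (LinearMap.range φ)]
    (hW : LinearMap.range φ ≤ W) (h : ∀ x ∈ W, φ x ∈ W) :
    LinearMap.trace F W (φ.restrict h) =
      LinearMap.trace F (LinearMap.range φ)
        (φ.restrict fun x _ => LinearMap.mem_range_self φ x) := by
  let a : W →ₗ[F] LinearMap.range φ :=
    (φ ∘ₗ W.subtype).codRestrict _ (fun x => LinearMap.mem_range_self φ (x : V))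
  let i : LinearMap.range φ →ₗ[F] W := Submodule.inclusion hW
  have h1 : φ.restrict h = i ∘ₗ a := rfl
  have h2 : (φ.restrict fun x _ => LinearMap.mem_range_self φ x) = a ∘ₗ i := rfl
  rw [h1, h2, LinearMap.trace_comp_comm']

noncomputable def myTrace (φ : Module.End F V) : F :=
  LinearMap.trace F (LinearMap.range φ)
    (φ.restrict fun x _ => LinearMap.mem_range_self φ x)

lemma myTrace_eq_traceRestrict {φ : Module.End F V} (hφ : LinearMap.rank φ < ℵ₀)
    {W : Submodule F V} [FiniteDimensional F W]
    (hW : LinearMap.range φ ≤ W) (h : ∀ x ∈ W, φ x ∈ W) :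
    myTrace φ = LinearMap.trace F W (φ.restrict h) := by
  have := fdRange hφ
  rw [traceRestrict_eq_range hW h, myTrace]

lemma range_restrict_sup {φ ψ : Module.End F V} :
    ∀ x ∈ (LinearMap.range φ ⊔ LinearMap.range ψ), φ x ∈ (LinearMap.range φ ⊔ LinearMap.range ψ) :=
  fun x _ => Submodule.mem_sup_left (LinearMap.mem_range_self φ x)

lemma fdSup {φ ψ : Module.End F V} (hφ : LinearMap.rank φ < ℵ₀) (hψ : LinearMap.rank ψ < ℵ₀) :
    FiniteDimensional F ↥(LinearMap.range φ ⊔ LinearMap.range ψ) := by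
  have h1 := fdRange hφ
  have h2 := fdRange hψ
  exact Submodule.finiteDimensional_sup _ _

lemma restrict_add (φ ψ : Module.End F V) {W : Submodule F V}
    (h1 : ∀ x ∈ W, φ x ∈ W) (h2 : ∀ x ∈ W, ψ x ∈ W) :
    (φ + ψ).restrict (fun x hx => W.add_mem (h1 x hx) (h2 x hx)) =
      φ.restrict h1 + ψ.restrict h2 := rfl

lemma myTrace_add {φ ψ : Module.End F V} (hφ : LinearMap.rank φ < ℵ₀)
    (hψ : LinearMap.rank ψ < ℵ₀) : myTrace (φ + ψ) = myTrace φ + myTrace ψ := by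
  have := fdSup hφ hψ
  set W := LinearMap.range φ ⊔ LinearMap.range ψ with hWdef
  have hle : LinearMap.range (φ + ψ) ≤ W := by
    rintro _ ⟨x, rfl⟩
    exact W.add_mem (Submodule.mem_sup_left (LinearMap.mem_range_self φ x))
      (Submodule.mem_sup_right (LinearMap.mem_range_self ψ x))
  have h1 : ∀ x ∈ W, φ x ∈ W := fun x _ => Submodule.mem_sup_left (LinearMap.mem_range_self φ x)
  have h2 : ∀ x ∈ W, ψ x ∈ W := fun x _ => Submodule.mem_sup_right (LinearMap.mem_range_self ψ x)
  have hsum : LinearMap.rank (φ + ψ) < ℵ₀ :=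
    lt_of_le_of_lt (LinearMap.rank_add_le _ _) (Cardinal.add_lt_of_lt le_rfl hφ hψ)
  rw [myTrace_eq_traceRestrict hsum hle (fun x hx => W.add_mem (h1 x hx) (h2 x hx)),
    restrict_add φ ψ h1 h2, map_add, ← myTrace_eq_traceRestrict hφ le_sup_left h1,
    ← myTrace_eq_traceRestrict hψ le_sup_right h2]

lemma restrict_smul (c : F) (φ : Module.End F V) {W : Submodule F V}
    (h1 : ∀ x ∈ W, φ x ∈ W) :
    (c • φ).restrict (fun x hx => W.smul_mem c (h1 x hx)) = c • φ.restrict h1 := rfl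

lemma range_smul_le (c : F) (φ : Module.End F V) :
    LinearMap.range (c • φ) ≤ LinearMap.range φ := by
  rintro _ ⟨x, rfl⟩; exact ⟨c • x, by simp⟩

lemma myTrace_smul {φ : Module.End F V} (hφ : LinearMap.rank φ < ℵ₀) (c : F) :
    myTrace (c • φ) = c * myTrace φ := by
  have := fdRange hφ
  have h1 : ∀ x ∈ LinearMap.range φ, φ x ∈ LinearMap.range φ :=
    fun x _ => LinearMap.mem_range_self φ x
  have hc : LinearMap.rank (c • φ) < ℵ₀ :=
    lt_of_le_of_lt (Submodule.rank_mono (range_smul_le c φ)) hφ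
  rw [myTrace_eq_traceRestrict hc (range_smul_le c φ)
      (fun x hx => (LinearMap.range φ).smul_mem c (h1 x hx)),
    restrict_smul, map_smul, smul_eq_mul, myTrace]

lemma rank_mul_lt {φ ψ : Module.End F V} (hφ : LinearMap.rank φ < ℵ₀)
    (hψ : LinearMap.rank ψ < ℵ₀) : LinearMap.rank (φ * ψ) < ℵ₀ :=
  lt_of_le_of_lt (LinearMap.rank_comp_le_left ψ φ) hφ

lemma myTrace_comm {φ ψ : Module.End F V} (hφ : LinearMap.rank φ < ℵ₀)
    (hψ : LinearMap.rank ψ < ℵ₀) : myTrace (φ * ψ) = myTrace (ψ * φ) := by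
  have := fdSup hφ hψ
  set W := LinearMap.range φ ⊔ LinearMap.range ψ with hWdef
  have h1 : ∀ x ∈ W, φ x ∈ W := fun x _ => Submodule.mem_sup_left (LinearMap.mem_range_self φ x)
  have h2 : ∀ x ∈ W, ψ x ∈ W := fun x _ => Submodule.mem_sup_right (LinearMap.mem_range_self ψ x)
  have hle1 : LinearMap.range (φ * ψ) ≤ W := by
    rintro _ ⟨x, rfl⟩; exact Submodule.mem_sup_left (LinearMap.mem_range_self φ _)
  have hle2 : LinearMap.range (ψ * φ) ≤ W := by
    rintro _ ⟨x, rfl⟩; exact Submodule.mem_sup_right (LinearMap.mem_range_self ψ _)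
  have e1 : (φ * ψ).restrict (fun x hx => h1 _ (h2 x hx)) = φ.restrict h1 * ψ.restrict h2 := rfl
  have e2 : (ψ * φ).restrict (fun x hx => h2 _ (h1 x hx)) = ψ.restrict h2 * φ.restrict h1 := rfl
  rw [myTrace_eq_traceRestrict (rank_mul_lt hφ hψ) hle1 (fun x hx => h1 _ (h2 x hx)),
    myTrace_eq_traceRestrict (rank_mul_lt hψ hφ) hle2 (fun x hx => h2 _ (h1 x hx)),
    e1, e2, LinearMap.trace_mul_comm]

lemma exists_goodW (φ : Module.End F V) (hφ : LinearMap.rank φ < ℵ₀) :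
    ∃ W : Submodule F V, FiniteDimensional F W ∧ LinearMap.range φ ≤ W ∧
      W.map φ = LinearMap.range φ := by
  have := fdRange hφ
  obtain ⟨s, hs⟩ : (LinearMap.range φ).FG :=
    (Submodule.fg_iff_finiteDimensional _).mpr (fdRange hφ)
  have hmem : ∀ y : s, ∃ x : V, φ x = y := by
    rintro ⟨y, hy⟩
    have : (y : V) ∈ LinearMap.range φ := by
      rw [← hs]; exact Submodule.subset_span (by simpa using hy)
    exact this
  choose g hg using hmem
  set U : Submodule F V := Submodule.span F (Set.range g) with hU
  have hUfd : FiniteDimensional F U := FiniteDimensional.span_of_finite _ (Set.finite_range g)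
  have hmapU : U.map φ = LinearMap.range φ := by
    rw [hU, Submodule.map_span, ← Set.range_comp]
    have : (φ ∘ g) = fun y : s => (y : V) := funext hg
    rw [this]
    have h2 : (Set.range fun y : s => (y : V)) = (s : Set V) := by
      ext x; simp
    rw [h2, hs]
  refine ⟨LinearMap.range φ ⊔ U, Submodule.finiteDimensional_sup _ _, le_sup_left, ?_⟩
  refine le_antisymm (LinearMap.map_le_range) ?_
  rw [← hmapU]
  exact Submodule.map_mono le_sup_right

lemma mul_smulRight (p q : V →ₗ[F] F) (c d : V) :
    (p.smulRight c) * (q.smulRight d) = p d • q.smulRight c := by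
  ext x
  simp [smul_smul, mul_comm]

lemma trace_smulRight'' {W : Type*} [AddCommGroup W] [Module F W]
    [Module.Finite F W] [Module.Free F W] (f : W →ₗ[F] F) (w : W) :
    LinearMap.trace F W (f.smulRight w) = f w := by
  have h1 : f.smulRight w = (LinearMap.toSpanSingleton F W w) ∘ₗ f := by
    ext x; simp [LinearMap.toSpanSingleton]
  rw [h1, LinearMap.trace_comp_comm']
  have h2 : f ∘ₗ LinearMap.toSpanSingleton F W w = (f w) • LinearMap.id := by
    ext c; simp [LinearMap.toSpanSingleton, mul_comm]
  rw [h2, map_smul, LinearMap.trace_id, smul_eq_mul, Module.finrank_self]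
  simp

lemma rank_smulRight_lt (f : V →ₗ[F] F) (v : V) :
    LinearMap.rank (f.smulRight v) < ℵ₀ := by
  have hle : LinearMap.range (f.smulRight v) ≤ Submodule.span F {v} := by
    rintro _ ⟨x, rfl⟩
    exact Submodule.smul_mem _ _ (Submodule.mem_span_singleton_self v)
  refine lt_of_le_of_lt (Submodule.rank_mono hle) ?_
  refine lt_of_le_of_lt (rank_span_le _) ?_
  simp [Cardinal.one_lt_aleph0]

lemma myTrace_smulRight (f : V →ₗ[F] F) (v : V) :
    myTrace (f.smulRight v) = f v := by
  set W := Submodule.span F {v} with hW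
  have hfd : FiniteDimensional F W := FiniteDimensional.span_of_finite _ (Set.finite_singleton v)
  have hvW : v ∈ W := Submodule.mem_span_singleton_self v
  have hle : LinearMap.range (f.smulRight v) ≤ W := by
    rintro _ ⟨x, rfl⟩
    exact Submodule.smul_mem _ _ hvW
  have h : ∀ x ∈ W, (f.smulRight v) x ∈ W := fun x _ => Submodule.smul_mem _ _ hvW
  rw [myTrace_eq_traceRestrict (rank_smulRight_lt f v) hle h]
  have e : (f.smulRight v).restrict h = (f ∘ₗ W.subtype).smulRight ⟨v, hvW⟩ := rfl
  rw [e, trace_smulRight'']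
  rfl

lemma exists_dual_one (hV : ℵ₀ ≤ Module.rank F V) :
    ∃ (u : V) (h : V →ₗ[F] F), h u = 1 := by
  have : Nontrivial V := by
    rw [← rank_pos_iff_nontrivial (R := F)]
    exact lt_of_lt_of_le aleph0_pos hV
  have b := Module.Basis.ofVectorSpace F V
  obtain ⟨i⟩ := b.index_nonempty
  exact ⟨b i, b.coord i, by simp⟩

lemma myTrace_zero : myTrace (0 : Module.End F V) = 0 := by
  have e : ((0 : Module.End F V).restrict
      (fun x _ => LinearMap.mem_range_self (0 : Module.End F V) x) :
      LinearMap.range (0 : Module.End F V) →ₗ[F] LinearMap.range (0 : Module.End F V)) = 0 := by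
    ext x; simp
  rw [myTrace, e, map_zero]

lemma rank_neg (φ : Module.End F V) : LinearMap.rank (-φ) = LinearMap.rank φ := by
  unfold LinearMap.rank
  rw [LinearMap.range_neg]

lemma myTrace_neg {φ : Module.End F V} (hφ : LinearMap.rank φ < ℵ₀) :
    myTrace (-φ) = - myTrace φ := by
  have := myTrace_smul hφ (-1)
  simpa using this

lemma myTrace_sub {φ ψ : Module.End F V} (hφ : LinearMap.rank φ < ℵ₀)
    (hψ : LinearMap.rank ψ < ℵ₀) : myTrace (φ - ψ) = myTrace φ - myTrace ψ := by
  rw [sub_eq_add_neg, myTrace_add hφ (by rwa [rank_neg]), myTrace_neg hψ, sub_eq_add_neg]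

lemma rank_sub_lt {φ ψ : Module.End F V} (hφ : LinearMap.rank φ < ℵ₀)
    (hψ : LinearMap.rank ψ < ℵ₀) : LinearMap.rank (φ - ψ) < ℵ₀ := by
  rw [sub_eq_add_neg]
  exact lt_of_le_of_lt (LinearMap.rank_add_le _ _)
    (Cardinal.add_lt_of_lt le_rfl hφ (by rwa [rank_neg]))


/-- The set of commutators of finite-rank endomorphisms. -/
abbrev commSet : Set (Module.End F V) :=
  {x : Module.End F V | ∃ φ' ψ : Module.End F V,
    φ' ∈ rankIdeal F V ℵ₀ le_rfl ∧ ψ ∈ rankIdeal F V ℵ₀ le_rfl ∧ x = φ' * ψ - ψ * φ'}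

lemma mem_rankIdeal_iff {φ : Module.End F V} :
    φ ∈ rankIdeal F V ℵ₀ le_rfl ↔ LinearMap.rank φ < ℵ₀ := Iff.rfl

lemma smulRight_sub_mem (hV : ℵ₀ ≤ Module.rank F V) (g : V →ₗ[F] F) (w : V)
    {u : V} {h : V →ₗ[F] F} (hu : h u = 1) :
    g.smulRight w - (g w) • (h.smulRight u) ∈ Submodule.span F (commSet (F := F) (V := V)) := by
  apply Submodule.subset_span
  refine ⟨h.smulRight w, g.smulRight u, rank_smulRight_lt h w, rank_smulRight_lt g u, ?_⟩
  rw [mul_smulRight, mul_smulRight, hu, one_smul]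

lemma myTrace_zero_mem_span (hV : ℵ₀ ≤ Module.rank F V) {φ : Module.End F V}
    (hφ : LinearMap.rank φ < ℵ₀) (h0 : myTrace φ = 0) :
    φ ∈ Submodule.span F (commSet (F := F) (V := V)) := by
  have := fdRange hφ
  set R := LinearMap.range φ with hR
  let b : Module.Basis (Fin (Module.finrank F R)) F R := Module.finBasis F R
  let φ' : V →ₗ[F] R := φ.codRestrict R (fun x => LinearMap.mem_range_self φ x)
  let f : Fin (Module.finrank F R) → (V →ₗ[F] F) := fun i => (b.coord i) ∘ₗ φ'
  let v : Fin (Module.finrank F R) → V := fun i => (b i : V)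
  have hdecomp : φ = ∑ i, (f i).smulRight (v i) := by
    ext x
    have h2 := congrArg (Subtype.val) (b.sum_repr (φ' x))
    rw [Submodule.coe_sum] at h2
    simp only [Submodule.coe_smul] at h2
    simp [f, v, Module.Basis.coord]
    exact h2.symm
  have htr : ∑ i, (f i) (v i) = 0 := by
    rw [← h0]
    have e1 : myTrace φ = ∑ i, b.repr
        ((φ.restrict fun x _ => LinearMap.mem_range_self φ x) (b i)) i := by
      rw [myTrace, LinearMap.trace_eq_matrix_trace F b, Matrix.trace]
      simp [Matrix.diag, LinearMap.toMatrix_apply]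
    rw [e1]
    exact Finset.sum_congr rfl (fun i _ => rfl)
  obtain ⟨u, h, hu⟩ := exists_dual_one hV
  have key : φ = ∑ i, ((f i).smulRight (v i) - (f i (v i)) • (h.smulRight u)) := by
    rw [Finset.sum_sub_distrib, ← Finset.sum_smul, htr, zero_smul, sub_zero, ← hdecomp]
  rw [key]
  exact Submodule.sum_mem _ (fun i _ => smulRight_sub_mem hV (f i) (v i) hu)

lemma of_mem_span {φ : Module.End F V}
    (hmem : φ ∈ Submodule.span F (commSet (F := F) (V := V))) :
    LinearMap.rank φ < ℵ₀ ∧ myTrace φ = 0 := by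
  induction hmem using Submodule.span_induction with
  | mem x hx =>
    obtain ⟨a, c, ha, hc, rfl⟩ := hx
    rw [mem_rankIdeal_iff] at ha hc
    refine ⟨rank_sub_lt (rank_mul_lt ha hc) (rank_mul_lt hc ha), ?_⟩
    rw [myTrace_sub (rank_mul_lt ha hc) (rank_mul_lt hc ha), myTrace_comm ha hc, sub_self]
  | zero => exact ⟨by simpa using (rank_smulRight_lt (0 : V →ₗ[F] F) 0), myTrace_zero⟩
  | add x y _ _ hx hy =>
    refine ⟨lt_of_le_of_lt (LinearMap.rank_add_le _ _)
      (Cardinal.add_lt_of_lt le_rfl hx.1 hy.1), ?_⟩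
    rw [myTrace_add hx.1 hy.1, hx.2, hy.2, add_zero]
  | smul c x _ hx =>
    refine ⟨lt_of_le_of_lt (Submodule.rank_mono (range_smul_le c x)) hx.1, ?_⟩
    rw [myTrace_smul hx.1 c, hx.2, mul_zero]

lemma tr_eq_myTrace (tr : Module.End F V →ₗ[F] F)
    (htr : ∀ (φ : Module.End F V), φ ∈ rankIdeal F V ℵ₀ le_rfl →
      ∀ (W : Submodule F V) (_ : FiniteDimensional F W)
        (hr : LinearMap.range φ ≤ W) (_ : W.map φ = LinearMap.range φ),
        tr φ = LinearMap.trace F W (LinearMap.restrict φ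
          (fun x _ => hr (LinearMap.mem_range_self φ x))))
    {φ : Module.End F V} (hφ : φ ∈ rankIdeal F V ℵ₀ le_rfl) : tr φ = myTrace φ := by
  rw [mem_rankIdeal_iff] at hφ
  obtain ⟨W, hWfd, hle, hmap⟩ := exists_goodW φ hφ
  rw [htr φ hφ W hWfd hle hmap,
    ← myTrace_eq_traceRestrict hφ hle (fun x _ => hle (LinearMap.mem_range_self φ x))]

/-- The canonical trace as a linear functional on the ideal. -/
noncomputable def Tlin : ↥(rankIdeal F V ℵ₀ le_rfl) →ₗ[F] F where
  toFun := fun φ => myTrace (φ : Module.End F V)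
  map_add' := fun a b => myTrace_add a.2 b.2
  map_smul' := fun c a => myTrace_smul a.2 c

end Helpers

/-- A finite-rank endomorphism has trace zero iff it lies in the span of commutators of
finite-rank endomorphisms; consequently that span has codimension `1` in `I_{ℵ₀}`. -/
theorem trace_zero_iff_commutator_span (hV : ℵ₀ ≤ Module.rank F V) :
    (∀ tr : Module.End F V →ₗ[F] F,
      (∀ (φ : Module.End F V), φ ∈ rankIdeal F V ℵ₀ le_rfl →
        ∀ (W : Submodule F V) (_ : FiniteDimensional F W)
          (hr : LinearMap.range φ ≤ W) (_ : W.map φ = LinearMap.range φ),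
          tr φ = LinearMap.trace F W (LinearMap.restrict φ
            (fun x _ => hr (LinearMap.mem_range_self φ x)))) →
      ∀ φ : Module.End F V, φ ∈ rankIdeal F V ℵ₀ le_rfl →
        (tr φ = 0 ↔ φ ∈ Submodule.span F {x : Module.End F V | ∃ φ' ψ : Module.End F V,
          φ' ∈ rankIdeal F V ℵ₀ le_rfl ∧ ψ ∈ rankIdeal F V ℵ₀ le_rfl ∧
          x = φ' * ψ - ψ * φ'})) ∧
    Module.rank F (↥(rankIdeal F V ℵ₀ le_rfl) ⧸
      Submodule.comap (rankIdeal F V ℵ₀ le_rfl).subtype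
        (Submodule.span F {x : Module.End F V | ∃ φ' ψ : Module.End F V,
          φ' ∈ rankIdeal F V ℵ₀ le_rfl ∧ ψ ∈ rankIdeal F V ℵ₀ le_rfl ∧
          x = φ' * ψ - ψ * φ'})) = 1 := by
  constructor
  · intro tr htr φ hφ
    have heq : tr φ = myTrace φ := tr_eq_myTrace tr htr hφ
    rw [heq]
    constructor
    · exact fun h0 => myTrace_zero_mem_span hV hφ h0
    · exact fun hm => (of_mem_span hm).2
  · have hker : Submodule.comap (rankIdeal F V ℵ₀ le_rfl).subtype
        (Submodule.span F {x : Module.End F V | ∃ φ' ψ : Module.End F V,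
          φ' ∈ rankIdeal F V ℵ₀ le_rfl ∧ ψ ∈ rankIdeal F V ℵ₀ le_rfl ∧
          x = φ' * ψ - ψ * φ'}) = LinearMap.ker (Tlin (F := F) (V := V)) := by
      ext φ
      simp only [Submodule.mem_comap, LinearMap.mem_ker, Submodule.subtype_apply]
      constructor
      · exact fun hm => (of_mem_span hm).2
      · exact fun h0 => myTrace_zero_mem_span hV φ.2 h0
    obtain ⟨u, h, hu⟩ := exists_dual_one (F := F) (V := V) hV
    have hsurj : Function.Surjective (Tlin (F := F) (V := V)) := by
      intro c
      refine ⟨c • ⟨h.smulRight u, rank_smulRight_lt h u⟩, ?_⟩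
      rw [map_smul]
      show c • myTrace (h.smulRight u) = c
      rw [myTrace_smulRight, hu, smul_eq_mul, mul_one]
    have e := (Tlin (F := F) (V := V)).quotKerEquivOfSurjective hsurj
    rw [hker]
    have h1 := e.lift_rank_eq
    rw [Module.rank_self, Cardinal.lift_one] at h1
    simpa using h1
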